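/- With g^p as the hypercone projection formula, ⟨g, g^p⟩ = ‖g‖² sin²(Δ + φ), where φ is the angle between a and g. -/

import Mathlib

open Real RealInnerProductSpace InnerProductGeometry

/-- Inner product of `g` with its hypercone projection: `⟪g, g^p⟫ = ‖g‖² sin²(Δ + φ)`. -/
theorem cone_projection_inner_self {n : ℕ} {a g : EuclideanSpace ℝ (Fin n)} (Δ φ : ℝ)
    (ha : a ≠ 0) (hg : g ≠ 0) (hΔ0 : 0 ≤ Δ) (hΔ1 : Δ < π / 2)
    (hφ : φ = angle a g) (hφ1 : 0 < φ) (hφ2 : φ < π) :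
    ⟪g, ((Real.cos Δ / Real.sin φ) * Real.sin (Δ + φ)) •
      (g + ((‖g‖ / ‖a‖) * (Real.sin φ * Real.tan Δ - Real.cos φ)) • a)⟫
      = ‖g‖ ^ 2 * Real.sin (Δ + φ) ^ 2 := by
  have ha' : ‖a‖ ≠ 0 := norm_ne_zero_iff.mpr ha
  have hsφ : Real.sin φ ≠ 0 := ne_of_gt (Real.sin_pos_of_pos_of_lt_pi hφ1 hφ2)
  have hcΔ : Real.cos Δ ≠ 0 := ne_of_gt (Real.cos_pos_of_mem_Ioo ⟨by linarith [Real.pi_pos], hΔ1⟩)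
  have hga : ⟪g, a⟫ = ‖a‖ * ‖g‖ * Real.cos φ := by
    rw [hφ, real_inner_comm, ← cos_angle_mul_norm_mul_norm]; ring
  rw [real_inner_smul_right, inner_add_right, real_inner_smul_right, hga,
    real_inner_self_eq_norm_sq]
  have hsin : Real.sin (Δ + φ) = Real.sin Δ * Real.cos φ + Real.cos Δ * Real.sin φ :=
    Real.sin_add Δ φ
  rw [Real.tan_eq_sin_div_cos]
  field_simp
  rw [hsin]
  linear_combination (-(Real.cos Δ) * (Real.sin Δ * Real.cos φ + Real.cos Δ * Real.sin φ)) * (Real.sin_sq_add_cos_sq φ)
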